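/- Let Σ be a finite alphabet and X ⊆ Σ^ℤ a subshift. Then X is a finite union of periodic orbits if and only if every past in X extends uniquely, i.e., for all x, y ∈ X, if x|_{-ℕ} = y|_{-ℕ} then x = y. -/

import Mathlib

open Topology


/-- The two-sided shift map on `ℤ → A`. -/
def shiftMap {A : Type*} (x : ℤ → A) : ℤ → A := fun i => x (i + 1)

namespace SubshiftAux7

variable {A : Type*}

lemma shift_mem {X : Set (ℤ → A)} (hinv : shiftMap '' X = X) :
    ∀ (a : ℤ) {x : ℤ → A}, x ∈ X → (fun i => x (i + a)) ∈ X := by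
  have h1 : ∀ {x : ℤ → A}, x ∈ X → (fun i => x (i + 1)) ∈ X := by
    intro x hx
    have : shiftMap x ∈ shiftMap '' X := ⟨x, hx, rfl⟩
    rwa [hinv] at this
  have h2 : ∀ {x : ℤ → A}, x ∈ X → (fun i => x (i - 1)) ∈ X := by
    intro x hx
    rw [← hinv] at hx
    obtain ⟨y, hy, hxy⟩ := hx
    have hxy' : (fun i => x (i - 1)) = y := by
      funext i
      have := congrFun hxy (i - 1)
      simp only [shiftMap] at this
      rw [show i - 1 + 1 = i by ring] at this
      exact this.symm
    rw [hxy']; exact hy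
  intro a
  induction a using Int.induction_on with
  | zero => intro x hx; simpa using hx
  | succ n ih =>
      intro x hx
      have h := h1 (ih hx)
      have he : (fun i => (fun j => x (j + (n : ℤ))) (i + 1)) = (fun i => x (i + ((n : ℤ) + 1))) := by
        funext i; simp only []; congr 1; ring
      rwa [he] at h
  | pred n ih =>
      intro x hx
      have h := h2 (ih hx)
      have he : (fun i => (fun j => x (j + (-(n : ℤ)))) (i - 1)) = (fun i => x (i + (-(n : ℤ) - 1))) := by
        funext i; simp only []; congr 1; ring
      rwa [he] at h

/-- The window of length `N` just before position `a`. -/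
def window (N : ℕ) (x : ℤ → A) (a : ℤ) : Fin N → A := fun k => x (a - 1 - (k.val : ℤ))

lemma window_shift (N : ℕ) (x : ℤ → A) (a b : ℤ) :
    window N (fun i => x (i + a)) b = window N x (b + a) := by
  funext k; simp only [window]; congr 1; ring

/-- Iterating a period. -/
lemma per_mul_int {x : ℤ → A} {p : ℤ} (hp : ∀ i, x (i + p) = x i) :
    ∀ (n : ℤ) (i : ℤ), x (i + n * p) = x i := by
  intro n
  induction n using Int.induction_on with
  | zero => simp
  | succ n ih =>
      intro i
      have h : i + ((n : ℤ) + 1) * p = (i + p) + (n : ℤ) * p := by ring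
      rw [h, ih, hp]
  | pred n ih =>
      intro i
      have h : i + (-(n : ℤ) - 1) * p = (i - p) + (-(n : ℤ)) * p := by ring
      rw [h, ih]
      have := hp (i - p)
      rw [show i - p + p = i by ring] at this
      exact this.symm

/-- Uniform determinism: windows determine the next symbol. -/
lemma exists_det [Fintype A] [TopologicalSpace A] [DiscreteTopology A]
    {X : Set (ℤ → A)} (hcl : IsClosed X) (hinv : shiftMap '' X = X)
    (hext : ∀ x ∈ X, ∀ y ∈ X, (∀ i : ℤ, i < 0 → x i = y i) → x = y) :
    ∃ N : ℕ, ∀ x ∈ X, ∀ y ∈ X, ∀ a b : ℤ,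
      window N x a = window N y b → x a = y b := by
  by_contra hc
  push_neg at hc
  choose xf hxf yf hyf af bf hw hne using hc
  set u : ℕ → (ℤ → A) × (ℤ → A) := fun n =>
    ((fun i => xf n (i + af n)), (fun i => yf n (i + bf n))) with hu
  have humem : ∀ n, u n ∈ X ×ˢ X := fun n =>
    ⟨shift_mem hinv _ (hxf n), shift_mem hinv _ (hyf n)⟩
  have hagree : ∀ n, ∀ k : ℕ, 1 ≤ k → k ≤ n → (u n).1 (-(k : ℤ)) = (u n).2 (-(k : ℤ)) := by
    intro n k hk1 hkn
    have h := congrFun (hw n) ⟨k - 1, by omega⟩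
    simp only [window] at h
    simp only [hu]
    have e1 : -(k : ℤ) + af n = af n - 1 - (((k - 1 : ℕ) : ℤ)) := by push_cast [hk1]; ring
    have e2 : -(k : ℤ) + bf n = bf n - 1 - (((k - 1 : ℕ) : ℤ)) := by push_cast [hk1]; ring
    rw [e1, e2]
    exact h
  have hXc : IsCompact X := hcl.isCompact
  obtain ⟨z, hz, φ, hφ, hconv⟩ := (hXc.prod hXc).tendsto_subseq humem
  have hev1 : ∀ (i : ℤ), ∀ᶠ n in Filter.atTop, (u (φ n)).1 i = z.1 i := by
    intro i
    have h : Filter.Tendsto (fun n => (u (φ n)).1 i) Filter.atTop (𝓝 (z.1 i)) :=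
      (((continuous_apply i).comp continuous_fst).tendsto z).comp hconv
    have := h.eventually_mem (IsOpen.mem_nhds (isOpen_discrete {z.1 i}) rfl)
    simpa using this
  have hev2 : ∀ (i : ℤ), ∀ᶠ n in Filter.atTop, (u (φ n)).2 i = z.2 i := by
    intro i
    have h : Filter.Tendsto (fun n => (u (φ n)).2 i) Filter.atTop (𝓝 (z.2 i)) :=
      (((continuous_apply i).comp continuous_snd).tendsto z).comp hconv
    have := h.eventually_mem (IsOpen.mem_nhds (isOpen_discrete {z.2 i}) rfl)
    simpa using this
  have heqz : z.1 = z.2 := by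
    apply hext z.1 hz.1 z.2 hz.2
    intro i hi
    set k : ℕ := (-i).toNat with hk
    have hk1 : 1 ≤ k := by omega
    have hik : -(k : ℤ) = i := by omega
    obtain ⟨n, ⟨h1, h2⟩, h3⟩ :=
      (((hev1 i).and (hev2 i)).and (Filter.eventually_ge_atTop k)).exists
    have hkn : k ≤ φ n := le_trans h3 hφ.le_apply
    have := hagree (φ n) k hk1 hkn
    rw [hik] at this
    rw [← h1, ← h2, this]
  obtain ⟨n, h1, h2⟩ := ((hev1 0).and (hev2 0)).exists
  apply hne (φ n)
  have h0 : (u (φ n)).1 0 = (u (φ n)).2 0 := by rw [h1, h2, heqz]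
  simp only [hu] at h0
  rw [show (0 : ℤ) + af (φ n) = af (φ n) by ring,
      show (0 : ℤ) + bf (φ n) = bf (φ n) by ring] at h0
  exact h0

/-- From uniform determinism extract a uniform period. -/
lemma periodic_of_det [Fintype A] {X : Set (ℤ → A)} (hinv : shiftMap '' X = X) (N : ℕ)
    (det : ∀ x ∈ X, ∀ y ∈ X, ∀ a b : ℤ, window N x a = window N y b → x a = y b) :
    ∃ m : ℕ, 1 ≤ m ∧ ∀ x ∈ X, ∀ i : ℤ, x (i + m) = x i := by
  classical
  have wd : ∀ x ∈ X, ∀ y ∈ X, ∀ a b : ℤ, window N x a = window N y b →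
      window N x (a + 1) = window N y (b + 1) := by
    intro x hx y hy a b hw
    funext k
    rcases Nat.eq_zero_or_pos k.val with hk | hk
    · simp only [window, hk]
      rw [show a + 1 - 1 - ((0 : ℕ) : ℤ) = a by ring,
          show b + 1 - 1 - ((0 : ℕ) : ℤ) = b by ring]
      exact det x hx y hy a b hw
    · have h := congrFun hw ⟨k.val - 1, by omega⟩
      simp only [window] at h ⊢
      have e1 : a + 1 - 1 - (k.val : ℤ) = a - 1 - ((k.val - 1 : ℕ) : ℤ) := by
        push_cast [hk]; ring
      have e2 : b + 1 - 1 - (k.val : ℤ) = b - 1 - ((k.val - 1 : ℕ) : ℤ) := by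
        push_cast [hk]; ring
      rw [e1, e2]
      exact h
  set S : Set (Fin N → A) := {w | ∃ x, x ∈ X ∧ window N x 0 = w} with hS
  let g : (Fin N → A) → (Fin N → A) := fun w =>
    if h : w ∈ S then window N h.choose 1 else w
  have key : ∀ x ∈ X, ∀ a : ℤ, g (window N x a) = window N x (a + 1) := by
    intro x hx a
    have hmem : window N x a ∈ S :=
      ⟨(fun i => x (i + a)), shift_mem hinv a hx, by rw [window_shift, zero_add]⟩
    have hsp := hmem.choose_spec
    simp only [g, dif_pos hmem]
    have := wd _ hsp.1 x hx 0 a hsp.2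
    rwa [zero_add] at this
  have hmaps : ∀ w ∈ S, g w ∈ S := by
    rintro w ⟨x, hx, rfl⟩
    rw [key x hx 0]
    exact ⟨(fun i => x (i + 1)), shift_mem hinv 1 hx, by rw [window_shift]⟩
  have hsurj : ∀ w ∈ S, ∃ v ∈ S, g v = w := by
    rintro w ⟨x, hx, rfl⟩
    refine ⟨window N x (-1),
      ⟨(fun i => x (i + (-1))), shift_mem hinv (-1) hx, by rw [window_shift]; norm_num⟩, ?_⟩
    rw [key x hx (-1)]; norm_num
  let g' : S → S := fun s => ⟨g s.1, hmaps _ s.2⟩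
  have hgsurj : Function.Surjective g' := by
    rintro ⟨w, hwS⟩
    obtain ⟨v, hv, hgv⟩ := hsurj w hwS
    exact ⟨⟨v, hv⟩, Subtype.ext hgv⟩
  have hginj : Function.Injective g' := Finite.injective_iff_surjective.mpr hgsurj
  obtain ⟨i, j, hij, hfeq⟩ := Finite.exists_ne_map_eq_of_infinite (fun n : ℕ => g'^[n])
  obtain ⟨i, j, hlt, hfeq⟩ : ∃ i j : ℕ, i < j ∧ g'^[i] = g'^[j] := by
    rcases hij.lt_or_gt with h | h
    exacts [⟨i, j, h, hfeq⟩, ⟨j, i, h, hfeq.symm⟩]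
  set m := j - i with hm
  have hm1 : 1 ≤ m := by omega
  have hid : ∀ s : S, g'^[m] s = s := by
    intro s
    have hinj' : Function.Injective g'^[i] := hginj.iterate i
    apply hinj'
    calc g'^[i] (g'^[m] s) = g'^[i + m] s := (Function.iterate_add_apply g' i m s).symm
    _ = g'^[j] s := by rw [show i + m = j by omega]
    _ = g'^[i] s := by rw [← hfeq]
  have hval : ∀ (n : ℕ) (s : S), (g'^[n] s : Fin N → A) = g^[n] (s : Fin N → A) := by
    intro n
    induction n with
    | zero => intro s; simp
    | succ n ih =>
        intro s
        rw [Function.iterate_succ_apply, Function.iterate_succ_apply]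
        exact ih (g' s)
  have hiter : ∀ x ∈ X, ∀ a : ℤ, ∀ n : ℕ, g^[n] (window N x a) = window N x (a + n) := by
    intro x hx a n
    induction n with
    | zero => simp
    | succ n ih =>
        rw [Function.iterate_succ_apply', ih, key x hx]
        push_cast
        ring_nf
  refine ⟨m, hm1, ?_⟩
  intro x hx i
  have h1 : window N x i ∈ S :=
    ⟨(fun k => x (k + i)), shift_mem hinv i hx, by rw [window_shift, zero_add]⟩
  have h2 := congrArg Subtype.val (hid ⟨window N x i, h1⟩)
  rw [hval, hiter x hx i m] at h2
  exact det x hx x hx (i + m) i h2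

end SubshiftAux7

open SubshiftAux7 in
/-- A subshift over a finite alphabet is a finite union of periodic orbits
iff every past extends uniquely (points agreeing on all negative coordinates coincide). -/
theorem finite_union_periodic_iff_unique_extension
    {A : Type*} [Fintype A] [TopologicalSpace A] [DiscreteTopology A]
    (X : Set (ℤ → A)) (hne : X.Nonempty) (hcl : IsClosed X)
    (hinv : shiftMap '' X = X) :
    (X.Finite ∧ ∀ x ∈ X, ∃ p : ℕ, 1 ≤ p ∧ ∀ i : ℤ, x (i + p) = x i) ↔
      (∀ x ∈ X, ∀ y ∈ X, (∀ i : ℤ, i < 0 → x i = y i) → x = y) := by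
  constructor
  · rintro ⟨hfin, hper⟩ x hx y hy hagree
    obtain ⟨p, hp1, hpx⟩ := hper x hx
    obtain ⟨q, hq1, hqy⟩ := hper y hy
    funext i
    by_cases hi : i < 0
    · exact hagree i hi
    · push_neg at hi
      have hpq : (1 : ℤ) ≤ (p : ℤ) * q := by
        have h : 1 * 1 ≤ p * q := Nat.mul_le_mul hp1 hq1
        exact_mod_cast h
      set j : ℤ := i - (i + 1) * ((p : ℤ) * q) with hjdef
      have hj : j < 0 := by
        have h1 : (i + 1) * 1 ≤ (i + 1) * ((p : ℤ) * q) :=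
          mul_le_mul_of_nonneg_left hpq (by omega)
        rw [hjdef]; linarith
      have hx1 := per_mul_int hpx ((i + 1) * (q : ℤ)) j
      rw [show j + (i + 1) * (q : ℤ) * (p : ℤ) = i by rw [hjdef]; ring] at hx1
      have hy1 := per_mul_int hqy ((i + 1) * (p : ℤ)) j
      rw [show j + (i + 1) * (p : ℤ) * (q : ℤ) = i by rw [hjdef]; ring] at hy1
      rw [hx1, hy1, hagree j hj]
  · intro hext
    obtain ⟨N, det⟩ := exists_det hcl hinv hext
    obtain ⟨m, hm1, hper⟩ := periodic_of_det hinv N det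
    constructor
    · have hinj : Set.InjOn (fun x : ℤ → A => fun k : Fin m => x (k.val : ℤ)) X := by
        intro x hx y hy hxy
        funext i
        have hmne : (m : ℤ) ≠ 0 := by exact_mod_cast Nat.pos_iff_ne_zero.mp hm1
        have hmpos : (0 : ℤ) < (m : ℤ) := by exact_mod_cast hm1
        have hm0 : 0 ≤ i % (m : ℤ) := Int.emod_nonneg i hmne
        have hmlt : i % (m : ℤ) < (m : ℤ) := Int.emod_lt_of_pos i hmpos
        have hmod : ∀ z : ℤ → A, (∀ i' : ℤ, z (i' + m) = z i') → z i = z (i % m) := by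
          intro z hz
          have h := per_mul_int hz (i / (m : ℤ)) (i % (m : ℤ))
          rw [show i % (m : ℤ) + i / (m : ℤ) * (m : ℤ) = i by
            rw [mul_comm]; exact Int.emod_add_mul_ediv i (m : ℤ)] at h
          exact h
        have hlt : (i % (m : ℤ)).toNat < m := by omega
        have hcast : (((i % (m : ℤ)).toNat : ℕ) : ℤ) = i % (m : ℤ) := by omega
        have hcf := congrFun hxy ⟨(i % (m : ℤ)).toNat, hlt⟩
        simp only [] at hcf
        rw [hmod x (hper x hx), hmod y (hper y hy), ← hcast]
        exact hcf
      exact Set.Finite.of_finite_image (Set.toFinite _) hinj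
    · intro x hx
      exact ⟨m, hm1, hper x hx⟩
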